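/- Let T > 0 and 0 ≤ t ≤ T. Let U, y¹, y² : [0,T] → ℝ be continuous functions with y¹_r ≤ U_r and y²_r ≤ U_r for all r, and let k¹, k² : [0,T] → ℝ be continuous nondecreasing functions with k¹_0 = k²_0 = 0 whose Lebesgue–Stieltjes measures satisfy ∫_{[t,T]} (U_r − y¹_r) dk¹_r = 0 and ∫_{[t,T]} (U_r − y²_r) dk²_r = 0. Then ∫_{[t,T]} (y¹_r − y²_r) d(k¹ − k²)_r ≥ 0, i.e., ∫_{[t,T]} (y¹_r − y²_r) dk¹_r ≥ ∫_{[t,T]} (y¹_r − y²_r) dk²_r. -/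

import Mathlib

open Set MeasureTheory

/-- If `y¹, y²` are continuous paths below a continuous upper barrier `U` on `[0,T]`,
and `k¹, k²` are continuous nondecreasing functions starting at `0` whose
Lebesgue–Stieltjes measures satisfy the Skorohod minimality conditions
`∫_{[t,T]} (U - yⁱ) dkⁱ = 0`, then
`∫_{[t,T]} (y¹ - y²) dk¹ ≥ ∫_{[t,T]} (y¹ - y²) dk²`. -/
theorem upper_barrier_skorohod_integral_ge (T t : ℝ) (hT : 0 < T) (ht : 0 ≤ t) (htT : t ≤ T)
    (U y1 y2 : ℝ → ℝ)
    (hU : ContinuousOn U (Set.Icc 0 T))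
    (hy1 : ContinuousOn y1 (Set.Icc 0 T))
    (hy2 : ContinuousOn y2 (Set.Icc 0 T))
    (hy1U : ∀ r ∈ Set.Icc (0 : ℝ) T, y1 r ≤ U r)
    (hy2U : ∀ r ∈ Set.Icc (0 : ℝ) T, y2 r ≤ U r)
    (k1 k2 : StieltjesFunction ℝ)
    (hk1c : ContinuousOn (⇑k1) (Set.Icc 0 T))
    (hk2c : ContinuousOn (⇑k2) (Set.Icc 0 T))
    (hk10 : k1 0 = 0) (hk20 : k2 0 = 0)
    (hmin1 : ∫ r in Set.Icc t T, (U r - y1 r) ∂k1.measure = 0)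
    (hmin2 : ∫ r in Set.Icc t T, (U r - y2 r) ∂k2.measure = 0) :
    ∫ r in Set.Icc t T, (y1 r - y2 r) ∂k2.measure ≤
      ∫ r in Set.Icc t T, (y1 r - y2 r) ∂k1.measure := by
  have hsub : Set.Icc t T ⊆ Set.Icc 0 T := Set.Icc_subset_Icc ht le_rfl
  have hUc : ContinuousOn U (Set.Icc t T) := hU.mono hsub
  have hy1c : ContinuousOn y1 (Set.Icc t T) := hy1.mono hsub
  have hy2c : ContinuousOn y2 (Set.Icc t T) := hy2.mono hsub
  have hcomp : IsCompact (Set.Icc t T) := isCompact_Icc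
  have hI1 : IntegrableOn (fun r => U r - y1 r) (Set.Icc t T) k1.measure :=
    (hUc.sub hy1c).integrableOn_compact hcomp
  have hI1' : IntegrableOn (fun r => U r - y1 r) (Set.Icc t T) k2.measure :=
    (hUc.sub hy1c).integrableOn_compact hcomp
  have hI2 : IntegrableOn (fun r => U r - y2 r) (Set.Icc t T) k1.measure :=
    (hUc.sub hy2c).integrableOn_compact hcomp
  have hI2' : IntegrableOn (fun r => U r - y2 r) (Set.Icc t T) k2.measure :=
    (hUc.sub hy2c).integrableOn_compact hcomp
  have key : ∀ r, y1 r - y2 r = (U r - y2 r) - (U r - y1 r) := fun r => by ring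
  have h1 : ∫ r in Set.Icc t T, (y1 r - y2 r) ∂k1.measure
      = ∫ r in Set.Icc t T, (U r - y2 r) ∂k1.measure := by
    calc ∫ r in Set.Icc t T, (y1 r - y2 r) ∂k1.measure
        = ∫ r in Set.Icc t T, ((U r - y2 r) - (U r - y1 r)) ∂k1.measure := by
          simp_rw [key]
      _ = (∫ r in Set.Icc t T, (U r - y2 r) ∂k1.measure)
          - ∫ r in Set.Icc t T, (U r - y1 r) ∂k1.measure := integral_sub hI2 hI1
      _ = _ := by rw [hmin1, sub_zero]
  have h2 : ∫ r in Set.Icc t T, (y1 r - y2 r) ∂k2.measure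
      = - ∫ r in Set.Icc t T, (U r - y1 r) ∂k2.measure := by
    calc ∫ r in Set.Icc t T, (y1 r - y2 r) ∂k2.measure
        = ∫ r in Set.Icc t T, ((U r - y2 r) - (U r - y1 r)) ∂k2.measure := by
          simp_rw [key]
      _ = (∫ r in Set.Icc t T, (U r - y2 r) ∂k2.measure)
          - ∫ r in Set.Icc t T, (U r - y1 r) ∂k2.measure := integral_sub hI2' hI1'
      _ = _ := by rw [hmin2, zero_sub]
  have hpos1 : 0 ≤ ∫ r in Set.Icc t T, (U r - y2 r) ∂k1.measure :=
    setIntegral_nonneg measurableSet_Icc fun r hr => sub_nonneg.2 (hy2U r (hsub hr))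
  have hpos2 : 0 ≤ ∫ r in Set.Icc t T, (U r - y1 r) ∂k2.measure :=
    setIntegral_nonneg measurableSet_Icc fun r hr => sub_nonneg.2 (hy1U r (hsub hr))
  rw [h1, h2]
  linarith
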